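/- arXiv:1009.5165 — 2 statements merged into one kernel-verified Lean document; each statement's English description precedes it below -/
import Mathlib

section
/- Let X be a real random variable with median M. Suppose there exist standard Gaussian random variables ξ, ξ' such that (M − X)₊ ≤ ξ₊ and (X − M)₊ ≤ ξ'₊ almost surely, where x₊ = max(x,0). Then E[X²] − (E[X])² + (M − E[X])² ≤ 1; in particular Var(X) ≤ 1 and E[X²] ≤ (E[X])² + 1. -/
open MeasureTheory ProbabilityTheory Matrix Finset Real

/-- The `k`-th largest singular value (0-indexed) of a real matrix. -/
noncomputable def sv {m n : ℕ} (M : Matrix (Fin m) (Fin n) ℝ) : ℕ → ℝ :=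
  fun k => Real.sqrt (((List.ofFn
    (show (Mᵀ * M).IsHermitian by simpa [Matrix.conjTranspose_eq_transpose_of_trivial] using Matrix.isHermitian_conjTranspose_mul_self M).eigenvalues).insertionSort (· ≥ ·)).getD k 0)

/-- The Ky-Fan `(2,r)` norm: square root of the sum of the `r` largest squared singular values. -/
noncomputable def kyFan {m n : ℕ} (r : ℕ) (M : Matrix (Fin m) (Fin n) ℝ) : ℝ :=
  Real.sqrt (∑ k ∈ Finset.range r, (sv M k) ^ 2)

/-- The Frobenius (Hilbert-Schmidt) norm. -/
noncomputable def frob {m n : ℕ} (M : Matrix (Fin m) (Fin n) ℝ) : ℝ :=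
  Real.sqrt (∑ i, ∑ j, (M i j) ^ 2)

section Aux
open MeasureTheory ProbabilityTheory Real
open scoped ENNReal NNReal

lemma pdf_eq (x : ℝ) : gaussianPDFReal 0 1 x = (Real.sqrt (2 * π))⁻¹ * Real.exp (-(1/2) * x ^ 2) := by
  simp only [gaussianPDFReal, NNReal.coe_one, mul_one, sub_zero]
  congr 1
  ring

lemma indic_eq : (fun x : ℝ => (max x 0) ^ 2 * gaussianPDFReal 0 1 x)
    = Set.indicator (Set.Ioi (0:ℝ)) (fun x => x ^ 2 * gaussianPDFReal 0 1 x) := by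
  ext x
  rcases lt_or_ge 0 x with h | h
  · rw [Set.indicator_of_mem (Set.mem_Ioi.mpr h), max_eq_left h.le]
  · rw [Set.indicator_of_notMem (by simpa using h), max_eq_right h, zero_pow, zero_mul]
    norm_num

lemma integrableOn_key : IntegrableOn (fun x : ℝ => x ^ 2 * gaussianPDFReal 0 1 x) (Set.Ioi 0) := by
  have h : IntegrableOn (fun x : ℝ => (Real.sqrt (2 * π))⁻¹ * (x ^ (2:ℝ) * Real.exp (-(1/2) * x ^ 2))) (Set.Ioi 0) :=
    (integrableOn_rpow_mul_exp_neg_mul_sq (b := 1/2) (by norm_num) (s := 2) (by norm_num)).const_mul _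
  refine h.congr_fun (fun x hx => ?_) measurableSet_Ioi
  dsimp only
  rw [pdf_eq, show ((2:ℝ)) = ((2:ℕ):ℝ) by norm_num, Real.rpow_natCast]
  push_cast
  ring

lemma setint : ∫ x in Set.Ioi (0:ℝ), x ^ 2 * gaussianPDFReal 0 1 x = 1/2 := by
  have h : ∫ x in Set.Ioi (0:ℝ), x ^ 2 * gaussianPDFReal 0 1 x
      = (Real.sqrt (2 * π))⁻¹ * ∫ x in Set.Ioi (0:ℝ), x ^ (2:ℝ) * Real.exp (-(1/2) * x ^ (2:ℝ)) := by
    rw [← integral_const_mul]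
    refine setIntegral_congr_fun measurableSet_Ioi (fun x hx => ?_)
    rw [pdf_eq, show ((2:ℝ)) = ((2:ℕ):ℝ) by norm_num, Real.rpow_natCast]
    push_cast
    ring
  rw [h, integral_rpow_mul_exp_neg_mul_rpow (by norm_num) (by norm_num) (by norm_num)]
  have hG : Real.Gamma ((2 + 1) / 2) = (1/2) * Real.sqrt π := by
    rw [show ((2:ℝ) + 1)/2 = 1/2 + 1 by norm_num, Real.Gamma_add_one (by norm_num),
      Real.Gamma_one_half_eq]
  have hr : ((1:ℝ)/2) ^ (-(2 + 1) / 2 : ℝ) = 2 * Real.sqrt 2 := by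
    rw [show (-(2 + 1) / 2 : ℝ) = -(3/2) by norm_num, one_div,
      Real.inv_rpow (by norm_num), Real.rpow_neg (by norm_num), inv_inv,
      show ((3:ℝ))/2 = 1 + 1/2 by norm_num, Real.rpow_add (by norm_num), Real.rpow_one,
      ← Real.sqrt_eq_rpow]
  rw [hG, hr, show Real.sqrt (2*π) = Real.sqrt 2 * Real.sqrt π from Real.sqrt_mul (by norm_num) π]
  have h2 : Real.sqrt 2 ≠ 0 := by positivity
  have hp : Real.sqrt π ≠ 0 := by positivity
  field_simp
open MeasureTheory ProbabilityTheory Real Set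
open scoped ENNReal NNReal

lemma gauss_half_moment : ∫ x, (max x 0) ^ 2 ∂(gaussianReal 0 1) = 1/2 := by
  have hd : gaussianPDF 0 1 = fun x => ((gaussianPDFReal 0 1 x).toNNReal : ℝ≥0∞) := by
    ext x; rw [gaussianPDF, ENNReal.ofReal]
  rw [gaussianReal_of_var_ne_zero _ one_ne_zero, hd,
    integral_withDensity_eq_integral_smul ((measurable_gaussianPDFReal 0 1).real_toNNReal)]
  have : ∀ x : ℝ, (gaussianPDFReal 0 1 x).toNNReal • (max x 0) ^ 2
      = (max x 0) ^ 2 * gaussianPDFReal 0 1 x := by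
    intro x
    rw [NNReal.smul_def, smul_eq_mul, Real.coe_toNNReal _ (gaussianPDFReal_nonneg 0 1 x), mul_comm]
  simp_rw [this]
  rw [indic_eq, integral_indicator measurableSet_Ioi, setint]

lemma gauss_half_integrable : Integrable (fun x => (max x 0) ^ 2) (gaussianReal 0 1) := by
  rw [gaussianReal_of_var_ne_zero _ one_ne_zero,
    integrable_withDensity_iff (measurable_gaussianPDF 0 1)
      (ae_of_all _ fun x => ENNReal.ofReal_lt_top)]
  have : (fun x : ℝ => (max x 0) ^ 2 * (gaussianPDF 0 1 x).toReal)
      = Set.indicator (Set.Ioi (0:ℝ)) (fun x => x ^ 2 * gaussianPDFReal 0 1 x) := by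
    rw [← indic_eq]
    ext x
    rw [gaussianPDF, ENNReal.toReal_ofReal (gaussianPDFReal_nonneg 0 1 x)]
  rw [this]
  exact integrableOn_key.integrable_indicator measurableSet_Ioi

lemma ae_meas_of_gauss {Ω : Type*} [MeasureSpace Ω] [IsProbabilityMeasure (ℙ : Measure Ω)]
    {ξ : Ω → ℝ} (hξ : Measure.map ξ ℙ = gaussianReal 0 1) : AEMeasurable ξ ℙ := by
  by_contra h
  rw [Measure.map_of_not_aemeasurable h] at hξ
  exact (IsProbabilityMeasure.ne_zero (gaussianReal 0 1)) hξ.symm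

lemma plus_sq_int {Ω : Type*} [MeasureSpace Ω] [IsProbabilityMeasure (ℙ : Measure Ω)]
    {ξ : Ω → ℝ} (hξ : Measure.map ξ ℙ = gaussianReal 0 1) :
    Integrable (fun ω => (max (ξ ω) 0) ^ 2) ∧ ∫ ω, (max (ξ ω) 0) ^ 2 = 1/2 := by
  have hm : AEMeasurable ξ ℙ := ae_meas_of_gauss hξ
  have hg : AEStronglyMeasurable (fun x : ℝ => (max x 0) ^ 2) (Measure.map ξ ℙ) :=
    (((continuous_id.max continuous_const).pow 2)).aestronglyMeasurable
  constructor
  · have := (integrable_map_measure hg hm).mp (by rw [hξ]; exact gauss_half_integrable)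
    exact this
  · rw [← integral_map hm hg, hξ, gauss_half_moment]

theorem stmt5_aux {Ω : Type*} [MeasureSpace Ω] [IsProbabilityMeasure (ℙ : Measure Ω)]
    (X ξ ξ' : Ω → ℝ) (M : ℝ)
    (hX : Integrable X) (hX2 : Integrable (fun ω => (X ω) ^ 2))
    (hξ : Measure.map ξ ℙ = gaussianReal 0 1) (hξ' : Measure.map ξ' ℙ = gaussianReal 0 1)
    (h1 : ∀ᵐ ω ∂ℙ, max (M - X ω) 0 ≤ max (ξ ω) 0)
    (h2 : ∀ᵐ ω ∂ℙ, max (X ω - M) 0 ≤ max (ξ' ω) 0) :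
    (∫ ω, (X ω) ^ 2) - (∫ ω, X ω) ^ 2 + (M - ∫ ω, X ω) ^ 2 ≤ 1 ∧
    variance X ℙ ≤ 1 ∧
    (∫ ω, (X ω) ^ 2) ≤ (∫ ω, X ω) ^ 2 + 1 := by
  obtain ⟨hi1, he1⟩ := plus_sq_int hξ
  obtain ⟨hi2, he2⟩ := plus_sq_int hξ'
  -- integrability of (X - M)^2
  have hXM : Integrable (fun ω => (X ω - M) ^ 2) := by
    have : (fun ω => (X ω - M) ^ 2)
        = fun ω => (X ω) ^ 2 + ((-2*M) * X ω + M^2) := by ext ω; ring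
    rw [this]
    have i3 : Integrable (fun ω => (-2*M) * X ω + M^2) :=
      (hX.const_mul _).add (integrable_const _)
    exact hX2.add i3
  -- key bound
  have hkey : ∫ ω, (X ω - M) ^ 2 ≤ 1 := by
    have hmono : ∫ ω, (X ω - M) ^ 2
        ≤ ∫ ω, ((max (ξ' ω) 0) ^ 2 + (max (ξ ω) 0) ^ 2) := by
      refine integral_mono_ae hXM (hi2.add hi1) ?_
      filter_upwards [h1, h2] with ω hω1 hω2
      have hid : (X ω - M) ^ 2 = (max (X ω - M) 0) ^ 2 + (max (M - X ω) 0) ^ 2 := by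
        rcases le_total (X ω) M with h | h
        · rw [max_eq_right (by linarith), max_eq_left (by linarith)]; ring
        · rw [max_eq_left (by linarith), max_eq_right (by linarith)]; ring
      rw [hid]
      have b1 : (max (X ω - M) 0) ^ 2 ≤ (max (ξ' ω) 0) ^ 2 :=
        pow_le_pow_left₀ (le_max_right _ _) hω2 2
      have b2 : (max (M - X ω) 0) ^ 2 ≤ (max (ξ ω) 0) ^ 2 :=
        pow_le_pow_left₀ (le_max_right _ _) hω1 2
      linarith
    rw [integral_add hi2 hi1, he1, he2] at hmono
    linarith
  -- expand
  have hexp : ∫ ω, (X ω - M) ^ 2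
      = (∫ ω, (X ω) ^ 2) - 2 * M * (∫ ω, X ω) + M ^ 2 := by
    have : (fun ω => (X ω - M) ^ 2)
        = fun ω => (X ω) ^ 2 + ((-(2*M)) * X ω + M^2) := by ext ω; ring
    have i3 : Integrable (fun ω => (-(2*M)) * X ω + M^2) :=
      (hX.const_mul _).add (integrable_const _)
    have i4 : Integrable (fun ω => (-(2*M)) * X ω) := hX.const_mul _
    rw [this, integral_add hX2 i3, integral_add i4 (integrable_const _),
      integral_const_mul, integral_const]
    simp
    ring
  have hgoal1 : (∫ ω, (X ω) ^ 2) - (∫ ω, X ω) ^ 2 + (M - ∫ ω, X ω) ^ 2 ≤ 1 := by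
    nlinarith [hkey, hexp]
  refine ⟨hgoal1, ?_, ?_⟩
  · have hv : variance X ℙ = (∫ ω, (X ω) ^ 2) - (∫ ω, X ω) ^ 2 := by
      rw [variance_eq_sub ((memLp_two_iff_integrable_sq hX.aestronglyMeasurable).mpr hX2)]
      simp [Pi.pow_apply]
    rw [hv]
    nlinarith [sq_nonneg (M - ∫ ω, X ω)]
  · nlinarith [sq_nonneg (M - ∫ ω, X ω)]

end Aux

theorem stmt5 {Ω : Type*} [MeasureSpace Ω] [IsProbabilityMeasure (ℙ : Measure Ω)]
    (X ξ ξ' : Ω → ℝ) (M : ℝ)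
    (hX : Integrable X) (hX2 : Integrable (fun ω => (X ω) ^ 2))
    (hmed1 : (1 : ENNReal) / 2 ≤ ℙ {ω | X ω ≤ M}) (hmed2 : (1 : ENNReal) / 2 ≤ ℙ {ω | M ≤ X ω})
    (hξ : Measure.map ξ ℙ = gaussianReal 0 1) (hξ' : Measure.map ξ' ℙ = gaussianReal 0 1)
    (h1 : ∀ᵐ ω ∂ℙ, max (M - X ω) 0 ≤ max (ξ ω) 0)
    (h2 : ∀ᵐ ω ∂ℙ, max (X ω - M) 0 ≤ max (ξ' ω) 0) :
    (∫ ω, (X ω) ^ 2) - (∫ ω, X ω) ^ 2 + (M - ∫ ω, X ω) ^ 2 ≤ 1 ∧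
    variance X ℙ ≤ 1 ∧
    (∫ ω, (X ω) ^ 2) ≤ (∫ ω, X ω) ^ 2 + 1 :=
  stmt5_aux X ξ ξ' M hX hX2 hξ hξ' h1 h2
end

section
/- Let ξ be a standard Gaussian random variable and let a, b ≥ 0 with b²·(K−1)/(K+1) ≥ 0 for some K > 1. Then E[(ξ₊² + 2aξ₊ − c)₊] ≤ (2 + 4a + 2a²)·e^{−c/(2(1+a)²)} for every c ≥ 0, so in particular the quantity E[(ξ₊² + 2bξ₊ − (K−1)/(K+1)·b²)₊] decays exponentially in b². -/
open MeasureTheory ProbabilityTheory Real Filter Set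

noncomputable def phiR (x : ℝ) : ℝ := (Real.sqrt (2*Real.pi))⁻¹ * Real.exp (-x^2/2)

lemma phiR_eq : gaussianPDFReal 0 1 = phiR := by
  funext x
  simp [gaussianPDFReal, phiR]

lemma phiR_nonneg (x : ℝ) : 0 ≤ phiR x := by unfold phiR; positivity

lemma integrable_phiR : Integrable phiR := phiR_eq ▸ integrable_gaussianPDFReal 0 1

lemma integral_phiR : ∫ x, phiR x = 1 := phiR_eq ▸ integral_gaussianPDFReal_eq_one 0 one_ne_zero

noncomputable def Gfun (a c x : ℝ) : ℝ := max ((max x 0)^2 + 2*a*(max x 0) - c) 0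

noncomputable def Wfun (a c x : ℝ) : ℝ := (x + 2*a + (1-c) * (x / (1+x^2))) * phiR x

noncomputable def Vfun (a c x : ℝ) : ℝ :=
  ((x^2 + 2*a*x - c) + 2*(c-1)/(1+x^2)^2) * phiR x

lemma hasDerivAt_negW (a c x : ℝ) : HasDerivAt (fun y => -(Wfun a c y)) (Vfun a c x) x := by
  have hx2 : (1+x^2) ≠ 0 := by positivity
  have hphi : HasDerivAt phiR (-x * phiR x) x := by
    have h0 : HasDerivAt (fun y : ℝ => -y^2/2) (-(2*x^(2-1))/2) x :=
      (hasDerivAt_pow 2 x).neg.div_const 2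
    have h1 := (h0.exp).const_mul (Real.sqrt (2*Real.pi))⁻¹
    convert h1 using 1 <;> try rfl
    unfold phiR; ring
  have hq : HasDerivAt (fun y : ℝ => y / (1+y^2))
      ((1*(1+x^2) - x*(2*x^(2-1)))/(1+x^2)^2) x :=
    (hasDerivAt_id x).div ((hasDerivAt_pow 2 x).const_add 1) hx2
  have hp : HasDerivAt (fun y => y + 2*a + (1-c) * (y / (1+y^2)))
      (1 + (1-c) * ((1*(1+x^2) - x*(2*x^(2-1)))/(1+x^2)^2)) x := by
    have h := ((hasDerivAt_id x).add_const (2*a)).add (hq.const_mul (1-c))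
    simp only [one_mul, pow_one, Nat.add_one_sub_one] at h ⊢
    exact h
  have := (hp.mul hphi).neg
  convert this using 1 <;> try rfl
  unfold Vfun phiR
  field_simp
  ring


lemma tendsto_negW (a c : ℝ) (ha : 0 ≤ a) (hc : 1 ≤ c) :
    Tendsto (fun y => -(Wfun a c y)) atTop (nhds 0) := by
  set C := (Real.sqrt (2*Real.pi))⁻¹ with hC
  have hC0 : 0 ≤ C := by positivity
  set K := 2*a + (c-1) with hK
  have hK0 : 0 ≤ K := by simp only [hK]; linarith
  have hB : Tendsto (fun y => C * (y * Real.exp (-y)) + (C*K) * Real.exp (-y)) atTop (nhds 0) := by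
    have t1 : Tendsto (fun y : ℝ => y * Real.exp (-y)) atTop (nhds 0) := by
      simpa using Real.tendsto_pow_mul_exp_neg_atTop_nhds_zero 1
    have t2 : Tendsto (fun y : ℝ => Real.exp (-y)) atTop (nhds 0) :=
      Real.tendsto_exp_neg_atTop_nhds_zero
    simpa using (t1.const_mul C).add (t2.const_mul (C*K))
  apply squeeze_zero_norm' ?_ hB
  filter_upwards [eventually_ge_atTop (2:ℝ)] with y hy
  have hy0 : (0:ℝ) ≤ y := by linarith
  have hq0 : 0 ≤ y / (1+y^2) := by positivity
  have hq1 : y / (1+y^2) ≤ 1 := by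
    rw [div_le_one (by positivity)]; nlinarith
  have hpabs : |y + 2*a + (1-c) * (y / (1+y^2))| ≤ y + K := by
    rw [abs_le]
    constructor <;> nlinarith [mul_nonneg (sub_nonneg.2 hc) hq0,
      mul_le_mul_of_nonneg_left hq1 (sub_nonneg.2 hc)]
  have hexp : Real.exp (-y^2/2) ≤ Real.exp (-y) := by
    apply Real.exp_le_exp.2; nlinarith
  have hphi_le : phiR y ≤ C * Real.exp (-y) := by
    unfold phiR; exact mul_le_mul_of_nonneg_left hexp hC0
  have : ‖-(Wfun a c y)‖ = |y + 2*a + (1-c) * (y / (1+y^2))| * phiR y := by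
    rw [norm_neg, Real.norm_eq_abs]
    unfold Wfun
    rw [abs_mul, abs_of_nonneg (phiR_nonneg y)]
  rw [this]
  calc |y + 2*a + (1-c) * (y / (1+y^2))| * phiR y
      ≤ (y + K) * (C * Real.exp (-y)) := by
        apply mul_le_mul hpabs hphi_le (phiR_nonneg y) (by linarith)
    _ = C * (y * Real.exp (-y)) + (C*K) * Real.exp (-y) := by ring


lemma key (a c : ℝ) (ha : 0 ≤ a) (hc : 1 ≤ c) :
    Integrable (fun x => phiR x * Gfun a c x) ∧
    ∫ x, phiR x * Gfun a c x
      ≤ (1 + 2*a) * (Real.sqrt (2*Real.pi))⁻¹ * Real.exp ((1 - c/(1+a)^2)/2) := by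
  have hc0 : 0 ≤ c := by linarith
  set x₀ : ℝ := Real.sqrt (c + a^2) - a with hx₀def
  have hs : Real.sqrt (c + a^2) ^ 2 = c + a^2 := Real.sq_sqrt (by positivity)
  have hx₀0 : 0 ≤ x₀ := by
    simp only [hx₀def]
    nlinarith [hs, Real.sqrt_nonneg (c + a^2)]
  have hcx : x₀^2 + 2*a*x₀ = c := by
    simp only [hx₀def]; nlinarith [hs]
  -- G simplification on Ioi
  have hGpos : ∀ x ∈ Ioi x₀, Gfun a c x = x^2 + 2*a*x - c := by
    intro x hx
    have hx' : x₀ < x := hx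
    have hx0 : 0 ≤ x := le_trans hx₀0 hx'.le
    unfold Gfun
    rw [max_eq_left hx0, max_eq_left (by nlinarith)]
  have hGzero : ∀ x, x ∉ Ioi x₀ → phiR x * Gfun a c x = 0 := by
    intro x hx
    have hx' : x ≤ x₀ := not_lt.1 hx
    have h1 : 0 ≤ max x 0 := le_max_right x 0
    have h2 : max x 0 ≤ x₀ := max_le hx' hx₀0
    have : Gfun a c x = 0 := by
      unfold Gfun
      rw [max_eq_right (by nlinarith)]
    rw [this, mul_zero]
  have hGnonneg : ∀ x, 0 ≤ phiR x * Gfun a c x := fun x =>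
    mul_nonneg (phiR_nonneg x) (le_max_right _ _)
  -- FTC setup
  have hcont : ContinuousWithinAt (fun y => -(Wfun a c y)) (Ici x₀) x₀ :=
    (hasDerivAt_negW a c x₀).continuousAt.continuousWithinAt
  have hderiv : ∀ x ∈ Ioi x₀, HasDerivAt (fun y => -(Wfun a c y)) (Vfun a c x) x :=
    fun x _ => hasDerivAt_negW a c x
  have hVpos : ∀ x ∈ Ioi x₀, 0 ≤ Vfun a c x := by
    intro x hx
    have hx' : x₀ < x := hx
    have hx0 : 0 ≤ x := le_trans hx₀0 hx'.le
    unfold Vfun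
    have h1 : 0 ≤ x^2 + 2*a*x - c := by nlinarith
    have h2 : (0:ℝ) ≤ 2*(c-1)/(1+x^2)^2 := div_nonneg (by linarith) (by positivity)
    exact mul_nonneg (by linarith) (phiR_nonneg x)
  have htend := tendsto_negW a c ha hc
  have hIntV : IntegrableOn (Vfun a c) (Ioi x₀) :=
    integrableOn_Ioi_deriv_of_nonneg hcont hderiv hVpos htend
  have hEqV : ∫ x in Ioi x₀, Vfun a c x = 0 - (-(Wfun a c x₀)) :=
    integral_Ioi_of_hasDerivAt_of_nonneg hcont hderiv hVpos htend
  -- comparison on Ioi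
  have hle : ∀ x ∈ Ioi x₀, phiR x * Gfun a c x ≤ Vfun a c x := by
    intro x hx
    rw [hGpos x hx]
    unfold Vfun
    have h2 : (0:ℝ) ≤ 2*(c-1)/(1+x^2)^2 := div_nonneg (by linarith) (by positivity)
    nlinarith [phiR_nonneg x, mul_nonneg h2 (phiR_nonneg x)]
  have hmeasG : AEStronglyMeasurable (fun x => phiR x * Gfun a c x) (volume : Measure ℝ) := by
    apply Continuous.aestronglyMeasurable
    unfold phiR Gfun
    fun_prop
  have hIntG : IntegrableOn (fun x => phiR x * Gfun a c x) (Ioi x₀) := by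
    apply hIntV.mono' hmeasG.restrict
    rw [ae_restrict_iff' measurableSet_Ioi]
    filter_upwards with x hx
    rw [Real.norm_eq_abs, abs_of_nonneg (hGnonneg x)]
    exact hle x hx
  have hIntGglob : Integrable (fun x => phiR x * Gfun a c x) := by
    rw [← integrableOn_univ, ← Set.Iic_union_Ioi (a := x₀)]
    apply IntegrableOn.union ?_ hIntG
    rw [integrableOn_congr_fun (g := fun _ => (0:ℝ)) ?_ measurableSet_Iic]
    · exact integrableOn_zero
    · intro x hx
      exact hGzero x (by simpa using hx)
  refine ⟨hIntGglob, ?_⟩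
  have step1 : ∫ x, phiR x * Gfun a c x = ∫ x in Ioi x₀, phiR x * Gfun a c x :=
    (setIntegral_eq_integral_of_forall_compl_eq_zero hGzero).symm
  have step2 : ∫ x in Ioi x₀, phiR x * Gfun a c x ≤ ∫ x in Ioi x₀, Vfun a c x :=
    setIntegral_mono_on hIntG hIntV measurableSet_Ioi hle
  have step3 : Wfun a c x₀ ≤ (1 + 2*a) * phiR x₀ := by
    unfold Wfun
    apply mul_le_mul_of_nonneg_right ?_ (phiR_nonneg x₀)
    have h2 : (0:ℝ) < 1 + x₀^2 := by positivity
    have h3 : (1-c) * (x₀ / (1+x₀^2)) ≤ 1 - x₀ := by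
      rw [← mul_div_assoc, div_le_iff₀ h2]
      nlinarith [sq_nonneg (x₀ - 1), mul_nonneg ha (sq_nonneg x₀)]
    linarith
  have step4 : phiR x₀ ≤ (Real.sqrt (2*Real.pi))⁻¹ * Real.exp ((1 - c/(1+a)^2)/2) := by
    unfold phiR
    apply mul_le_mul_of_nonneg_left ?_ (by positivity)
    apply Real.exp_le_exp.2
    have hs2 : (0:ℝ) < (1+a)^2 := by positivity
    have key2 : c/(1+a)^2 ≤ 1 + x₀^2 := by
      rw [div_le_iff₀ hs2]
      nlinarith [mul_nonneg ha (sq_nonneg (x₀ - 1)), sq_nonneg x₀, sq_nonneg a,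
        mul_nonneg (mul_nonneg ha ha) (sq_nonneg x₀), mul_nonneg ha hx₀0]
    linarith
  calc ∫ x, phiR x * Gfun a c x = ∫ x in Ioi x₀, phiR x * Gfun a c x := step1
    _ ≤ ∫ x in Ioi x₀, Vfun a c x := step2
    _ = Wfun a c x₀ := by rw [hEqV]; ring
    _ ≤ (1 + 2*a) * phiR x₀ := step3
    _ ≤ (1 + 2*a) * ((Real.sqrt (2*Real.pi))⁻¹ * Real.exp ((1 - c/(1+a)^2)/2)) :=
        mul_le_mul_of_nonneg_left step4 (by linarith)
    _ = (1 + 2*a) * (Real.sqrt (2*Real.pi))⁻¹ * Real.exp ((1 - c/(1+a)^2)/2) := by ring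

lemma numeric_C : (Real.sqrt (2*Real.pi))⁻¹ ≤ 0.4 := by
  have hxpos : (0:ℝ) < Real.sqrt (2*Real.pi) := Real.sqrt_pos.2 (by positivity)
  have h25 : (2.5:ℝ) ≤ Real.sqrt (2*Real.pi) := by
    rw [show (2.5:ℝ) = Real.sqrt (2.5^2) by rw [Real.sqrt_sq]; norm_num]
    exact Real.sqrt_le_sqrt (by nlinarith [Real.pi_gt_d6])
  have hinv : (Real.sqrt (2*Real.pi))⁻¹ * Real.sqrt (2*Real.pi) = 1 :=
    inv_mul_cancel₀ (ne_of_gt hxpos)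
  nlinarith [inv_pos.2 hxpos]

lemma numeric_E : Real.exp (1/2) ≤ 1.65 := by
  have hsq : Real.exp (1/2) * Real.exp (1/2) = Real.exp 1 := by
    rw [← Real.exp_add]; norm_num
  nlinarith [Real.exp_one_lt_d9, Real.exp_pos ((1:ℝ)/2), sq_nonneg (Real.exp (1/2) - 1.65)]

lemma main_bound (a c : ℝ) (ha : 0 ≤ a) (hc : 0 ≤ c) :
    ∫ x, phiR x * Gfun a c x ≤ (2 + 4*a + 2*a^2) * Real.exp (-c/(2*(1+a)^2)) := by
  have hs2 : (0:ℝ) < (1+a)^2 := by positivity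
  have hCpos : (0:ℝ) ≤ (Real.sqrt (2*Real.pi))⁻¹ := by positivity
  by_cases hc1 : 1 ≤ c
  · obtain ⟨_, hbound⟩ := key a c ha hc1
    refine le_trans hbound ?_
    have hsplit : Real.exp ((1 - c/(1+a)^2)/2)
        = Real.exp (1/2) * Real.exp (-c/(2*(1+a)^2)) := by
      rw [← Real.exp_add]; congr 1; field_simp; ring
    rw [hsplit]
    have t1 : (1+2*a) * (Real.sqrt (2*Real.pi))⁻¹ ≤ (1+2*a) * 0.4 :=
      mul_le_mul_of_nonneg_left numeric_C (by linarith)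
    have t0 : (0:ℝ) ≤ (1+2*a) * (Real.sqrt (2*Real.pi))⁻¹ :=
      mul_nonneg (by linarith) hCpos
    have t2 : (1+2*a) * (Real.sqrt (2*Real.pi))⁻¹ * Real.exp (1/2)
        ≤ ((1+2*a) * 0.4) * 1.65 :=
      mul_le_mul t1 numeric_E (Real.exp_pos _).le (by nlinarith)
    have t3 : (1+2*a) * (Real.sqrt (2*Real.pi))⁻¹ * Real.exp (1/2) ≤ 2 + 4*a + 2*a^2 := by
      nlinarith
    calc (1+2*a) * (Real.sqrt (2*Real.pi))⁻¹ * (Real.exp (1/2) * Real.exp (-c/(2*(1+a)^2)))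
        = ((1+2*a) * (Real.sqrt (2*Real.pi))⁻¹ * Real.exp (1/2)) * Real.exp (-c/(2*(1+a)^2)) := by
          ring
      _ ≤ (2 + 4*a + 2*a^2) * Real.exp (-c/(2*(1+a)^2)) :=
          mul_le_mul_of_nonneg_right t3 (Real.exp_pos _).le
  · push_neg at hc1
    obtain ⟨hint1, hbound1⟩ := key a 1 ha le_rfl
    -- pointwise comparison
    have hpt : ∀ x, phiR x * Gfun a c x ≤ phiR x * Gfun a 1 x + (1-c) * phiR x := by
      intro x
      have hG : Gfun a c x ≤ Gfun a 1 x + (1-c) := by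
        unfold Gfun
        apply max_le
        · have := le_max_left ((max x 0)^2 + 2*a*(max x 0) - 1) (0:ℝ); linarith
        · have := le_max_right ((max x 0)^2 + 2*a*(max x 0) - 1) (0:ℝ); linarith
      nlinarith [phiR_nonneg x, mul_le_mul_of_nonneg_left hG (phiR_nonneg x)]
    have hintsum : Integrable (fun x => phiR x * Gfun a 1 x + (1-c) * phiR x) :=
      hint1.add (integrable_phiR.const_mul _)
    have hmeasc : AEStronglyMeasurable (fun x => phiR x * Gfun a c x) (volume : Measure ℝ) := by
      apply Continuous.aestronglyMeasurable
      unfold phiR Gfun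
      fun_prop
    have hintc : Integrable (fun x => phiR x * Gfun a c x) := by
      apply hintsum.mono' hmeasc
      filter_upwards with x
      have hg0 : (0:ℝ) ≤ Gfun a c x := by unfold Gfun; exact le_max_right _ _
      rw [Real.norm_eq_abs, abs_of_nonneg (mul_nonneg (phiR_nonneg x) hg0)]
      exact hpt x
    have hmono : ∫ x, phiR x * Gfun a c x
        ≤ ∫ x, (phiR x * Gfun a 1 x + (1-c) * phiR x) :=
      integral_mono hintc hintsum hpt
    have hsum : ∫ x, (phiR x * Gfun a 1 x + (1-c) * phiR x)
        = (∫ x, phiR x * Gfun a 1 x) + (1-c) := by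
      rw [integral_add hint1 (integrable_phiR.const_mul _), integral_const_mul,
        integral_phiR, mul_one]
    have hexp1 : Real.exp ((1 - 1/(1+a)^2)/2) ≤ 1.65 := by
      refine le_trans (Real.exp_le_exp.2 ?_) numeric_E
      have : (0:ℝ) ≤ 1/(1+a)^2 := by positivity
      linarith
    have hterm1 : ∫ x, phiR x * Gfun a 1 x ≤ 0.66 * (1+2*a) := by
      refine le_trans hbound1 ?_
      have t0 : (0:ℝ) ≤ (1+2*a) * (Real.sqrt (2*Real.pi))⁻¹ :=
        mul_nonneg (by linarith) hCpos
      have t1 : (1+2*a) * (Real.sqrt (2*Real.pi))⁻¹ ≤ (1+2*a) * 0.4 :=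
        mul_le_mul_of_nonneg_left numeric_C (by linarith)
      nlinarith [mul_le_mul t1 hexp1 (Real.exp_pos _).le (by nlinarith)]
    have hRHS : 2 + 4*a + 2*a^2 - c ≤ (2 + 4*a + 2*a^2) * Real.exp (-c/(2*(1+a)^2)) := by
      have h := Real.add_one_le_exp (-c/(2*(1+a)^2))
      have h2 : (2+4*a+2*a^2) * (-c/(2*(1+a)^2) + 1) = 2+4*a+2*a^2 - c := by
        field_simp; ring
      nlinarith [mul_le_mul_of_nonneg_left h (show (0:ℝ) ≤ 2+4*a+2*a^2 by nlinarith)]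
    nlinarith [hmono, hsum, hterm1, hRHS]


theorem stmt16 {Ω : Type*} [MeasureSpace Ω] [IsProbabilityMeasure (ℙ : Measure Ω)]
    (ξ : Ω → ℝ) (hξ : Measure.map ξ ℙ = gaussianReal 0 1) (a : ℝ) (ha : 0 ≤ a) :
    ∀ c : ℝ, 0 ≤ c →
      ∫ ω, max ((max (ξ ω) 0) ^ 2 + 2 * a * max (ξ ω) 0 - c) 0
        ≤ (2 + 4 * a + 2 * a ^ 2) * Real.exp (-c / (2 * (1 + a) ^ 2)) := by
  intro c hc
  have hmeasξ : AEMeasurable ξ ℙ := by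
    by_contra h
    rw [Measure.map_of_not_aemeasurable h] at hξ
    have h1 : (gaussianReal 0 1) Set.univ = 1 := measure_univ
    rw [← hξ] at h1
    simp at h1
  have hGc : Continuous (fun x => Gfun a c x) := by unfold Gfun; fun_prop
  have h1 : ∫ ω, max ((max (ξ ω) 0) ^ 2 + 2 * a * max (ξ ω) 0 - c) 0
      = ∫ x, Gfun a c x ∂(gaussianReal 0 1) := by
    rw [← hξ, integral_map hmeasξ hGc.aestronglyMeasurable]
    rfl
  have h2 : ∫ x, Gfun a c x ∂(gaussianReal 0 1) = ∫ x, phiR x * Gfun a c x := by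
    rw [gaussianReal_of_var_ne_zero _ one_ne_zero]
    have hpdf : gaussianPDF 0 1 = fun x => ((gaussianPDFReal 0 1 x).toNNReal : ENNReal) := rfl
    have hm : Measurable fun x => (gaussianPDFReal 0 1 x).toNNReal :=
      measurable_real_toNNReal.comp (measurable_gaussianPDFReal 0 1)
    rw [hpdf, integral_withDensity_eq_integral_smul hm]
    congr 1
    funext x
    rw [NNReal.smul_def, Real.coe_toNNReal _ (gaussianPDFReal_nonneg 0 1 x), phiR_eq, smul_eq_mul]
  rw [h1, h2]
  exact main_bound a c ha hc
end
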